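/- A finite lattice is Boolean if and only if it is uniquely atomistic, i.e., every element can be written in exactly one way as a join of a set of atoms. -/

import Mathlib

section Aux

variable {L : Type*} [Lattice L] [BoundedOrder L] [Fintype L]

open Finset

omit [Fintype L] in
private lemma atom_prime (hd : ∀ x y z : L, x ⊓ (y ⊔ z) = (x ⊓ y) ⊔ (x ⊓ z))
    {a : L} (ha : IsAtom a) :
    ∀ S : Finset L, a ≤ S.sup id → ∃ s ∈ S, a ≤ s := by
  classical
  intro S
  induction S using Finset.induction_on with
  | empty =>
    intro h
    simp only [Finset.sup_empty, le_bot_iff] at h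
    exact absurd h ha.1
  | insert b S' hb ih =>
    intro h
    rw [Finset.sup_insert] at h
    have key : a = (a ⊓ b) ⊔ (a ⊓ S'.sup id) := by
      rw [← hd]
      exact (inf_eq_left.mpr h).symm
    rcases lt_or_eq_of_le (inf_le_left : a ⊓ b ≤ a) with hlt | heq
    · have hbot : a ⊓ b = ⊥ := ha.2 _ hlt
      rw [hbot, bot_sup_eq] at key
      have : a ≤ S'.sup id := key.le.trans inf_le_right
      obtain ⟨s, hs, has⟩ := ih this
      exact ⟨s, Finset.mem_insert_of_mem hs, has⟩
    · exact ⟨b, Finset.mem_insert_self _ _, heq ▸ inf_le_right⟩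

end Aux

/-- A finite lattice is Boolean (distributive and complemented) if and only if
it is uniquely atomistic: every element is the join of a unique set of atoms. -/
theorem stmt2 {L : Type*} [Lattice L] [BoundedOrder L] [Fintype L] :
    ((∀ x y z : L, x ⊓ (y ⊔ z) = (x ⊓ y) ⊔ (x ⊓ z)) ∧
      (∀ x : L, ∃ y : L, x ⊓ y = ⊥ ∧ x ⊔ y = ⊤)) ↔
    (∀ x : L, ∃! S : Finset L, (∀ s ∈ S, IsAtom s) ∧ x = S.sup id) := by
  classical
  set T : L → Finset L := fun x => Finset.univ.filter (fun a => IsAtom a ∧ a ≤ x) with hT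
  have hTmem : ∀ x a, a ∈ T x ↔ IsAtom a ∧ a ≤ x := by
    intro x a; simp [hT]
  have hTatoms : ∀ x, ∀ s ∈ T x, IsAtom s := fun x s hs => ((hTmem x s).mp hs).1
  have hTsup_le : ∀ x : L, (T x).sup id ≤ x := by
    intro x
    exact Finset.sup_le (fun s hs => ((hTmem x s).mp hs).2)
  constructor
  · rintro ⟨hd, hc⟩ x
    -- x = sup of atoms below x
    have hx : x = (T x).sup id := by
      refine le_antisymm ?_ (hTsup_le x)
      by_contra h
      obtain ⟨c, hc1, hc2⟩ := hc ((T x).sup id)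
      have hxc : x = (T x).sup id ⊔ (x ⊓ c) := by
        have h0 : x ⊓ ((T x).sup id ⊔ c) = x := by rw [hc2, inf_top_eq]
        rw [hd, inf_eq_right.mpr (hTsup_le x)] at h0
        exact h0.symm
      have hne : x ⊓ c ≠ ⊥ := by
        intro hb
        rw [hb, sup_bot_eq] at hxc
        exact h hxc.le
      obtain ⟨a, ha, hale⟩ := (IsAtomic.eq_bot_or_exists_atom_le (x ⊓ c)).resolve_left hne
      have haT : a ∈ T x := (hTmem x a).mpr ⟨ha, hale.trans inf_le_left⟩
      have h1 : a ≤ (T x).sup id := Finset.le_sup (f := id) haT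
      have h2 : a ≤ c := hale.trans inf_le_right
      have : a ≤ ⊥ := hc1 ▸ le_inf h1 h2
      exact ha.1 (le_bot_iff.mp this)
    refine ⟨T x, ⟨hTatoms x, hx⟩, ?_⟩
    rintro S ⟨hS, hxS⟩
    ext a
    rw [hTmem]
    constructor
    · intro haS
      refine ⟨hS a haS, ?_⟩
      rw [hxS]
      exact Finset.le_sup (f := id) haS
    · rintro ⟨ha, hax⟩
      rw [hxS] at hax
      obtain ⟨s, hs, has⟩ := atom_prime hd ha S hax
      rcases (hS s hs).le_iff.mp has with h | h
      · exact absurd h ha.1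
      · rwa [h]
  · intro hU
    -- key facts
    have key1 : ∀ x : L, x = (T x).sup id := by
      intro x
      obtain ⟨S, ⟨hS, hxS⟩, _⟩ := hU x
      have hsub : S ⊆ T x :=
        fun s hs => (hTmem x s).mpr ⟨hS s hs, hxS ▸ Finset.le_sup (f := id) hs⟩
      exact le_antisymm (hxS.le.trans (Finset.sup_mono hsub)) (hTsup_le x)
    have key2 : ∀ S : Finset L, (∀ s ∈ S, IsAtom s) → T (S.sup id) = S := by
      intro S hS
      obtain ⟨S', _, huniq⟩ := hU (S.sup id)
      have h1 : T (S.sup id) = S' := huniq _ ⟨hTatoms _, key1 _⟩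
      have h2 : S = S' := huniq _ ⟨hS, rfl⟩
      rw [h1, h2]
    have key3 : ∀ x y : L, T (x ⊓ y) = T x ∩ T y := by
      intro x y
      ext a
      simp only [hTmem, Finset.mem_inter, le_inf_iff]
      tauto
    have key4 : ∀ x y : L, T (x ⊔ y) = T x ∪ T y := by
      intro x y
      have hatoms : ∀ s ∈ T x ∪ T y, IsAtom s := by
        intro s hs
        rcases Finset.mem_union.mp hs with h | h
        · exact hTatoms x s h
        · exact hTatoms y s h
      have hsup : (T x ∪ T y).sup id = x ⊔ y := by
        rw [Finset.sup_union, ← key1, ← key1]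
      rw [← hsup, key2 _ hatoms]
    constructor
    · intro x y z
      have hTeq : T (x ⊓ (y ⊔ z)) = T ((x ⊓ y) ⊔ (x ⊓ z)) := by
        rw [key3, key4, key4, key3, key3, Finset.inter_union_distrib_left]
      rw [key1 (x ⊓ (y ⊔ z)), key1 ((x ⊓ y) ⊔ (x ⊓ z)), hTeq]
    · intro x
      set S : Finset L := Finset.univ.filter (fun a => IsAtom a ∧ ¬ a ≤ x) with hS
      have hSatoms : ∀ s ∈ S, IsAtom s := by
        intro s hs
        simp only [hS, Finset.mem_filter] at hs
        exact hs.2.1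
      refine ⟨S.sup id, ?_, ?_⟩
      · have h1 : T (x ⊓ S.sup id) = T x ∩ S := by
          rw [key3, key2 S hSatoms]
        have h2 : T x ∩ S = ∅ := by
          ext a
          simp only [hTmem, hS, Finset.mem_inter, Finset.mem_filter, Finset.notMem_empty,
            iff_false]
          tauto
        rw [key1 (x ⊓ S.sup id), h1, h2, Finset.sup_empty]
      · have h1 : T (x ⊔ S.sup id) = T x ∪ S := by
          rw [key4, key2 S hSatoms]
        have h2 : T x ∪ S = T ⊤ := by
          ext a
          simp only [hTmem, hS, Finset.mem_union, Finset.mem_filter, Finset.mem_univ,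
            true_and, le_top, and_true]
          tauto
        rw [key1 (x ⊔ S.sup id), h1, h2, ← key1 ⊤]
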